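/- Let w ∈ S_n be one of the four elements: s_i; s_i s_{i−1}⋯s_{i−δ} (δ ≥ 1); s_i s_{i+1}⋯s_{i+δ} (δ ≥ 1); or s_i s_{i−1}⋯s_{i−δ⁻} s_{i+1}⋯s_{i+δ⁺} (δ⁻, δ⁺ ≥ 1), where all indices lie in {1,…,n−1}. Then there is exactly one transposition t ∈ S_n such that t·w lies in the subgroup of S_n generated by {s_j : j ≠ i}. -/

import Mathlib

/-- The simple transposition `s_j = (j, j+1)` of `S_n` (here `n = m + 1` and the simple
transpositions are indexed 0-based by `j ∈ {0, …, m-1}`; out-of-range indices give `1`). -/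
def simpleT (m : ℕ) (j : ℕ) : Equiv.Perm (Fin (m + 1)) :=
  if h : j < m then Equiv.swap ⟨j, by omega⟩ ⟨j + 1, by omega⟩ else 1

/-- The product of the word `l` (a list of 0-based indices of simple transpositions). -/
def wordProd (m : ℕ) (l : List ℕ) : Equiv.Perm (Fin (m + 1)) :=
  (l.map (simpleT m)).prod

/-- The set of simple transpositions `s_j` with `j ≠ i`. -/
def simplesAvoiding (m : ℕ) (i : ℕ) : Set (Equiv.Perm (Fin (m + 1))) :=
  {g | ∃ j : ℕ, j < m ∧ j ≠ i ∧ g = simpleT m j}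

lemma simpleT_preserves {m i j : ℕ} (hj : j < m) (hij : j ≠ i)
    (x : Fin (m + 1)) : ((simpleT m j) x).val ≤ i ↔ x.val ≤ i := by
  unfold simpleT
  rw [dif_pos hj, Equiv.swap_apply_def]
  split_ifs with h1 h2
  · have : x.val = j := by rw [h1]
    simp only [this]
    omega
  · have : x.val = j + 1 := by rw [h2]
    simp only [this]
    omega
  · rfl

lemma mem_closure_preserves {m i : ℕ} {g : Equiv.Perm (Fin (m + 1))}
    (hg : g ∈ Subgroup.closure (simplesAvoiding m i)) :
    ∀ x, (g x).val ≤ i ↔ x.val ≤ i := by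
  induction hg using Subgroup.closure_induction with
  | mem x hx =>
    obtain ⟨j, hj, hij, rfl⟩ := hx
    exact simpleT_preserves hj hij
  | one => intro x; rfl
  | mul a b ha hb ia ib =>
    intro x
    rw [Equiv.Perm.mul_apply, ia, ib]
  | inv a ha ia =>
    intro x
    have := ia (a⁻¹ x)
    simpa using this.symm

lemma simpleT_sq (m j : ℕ) : simpleT m j * simpleT m j = 1 := by
  unfold simpleT
  split_ifs with h
  · exact Equiv.swap_mul_self _ _
  · simp

lemma wordProd_cons (m : ℕ) (j : ℕ) (l : List ℕ) :
    wordProd m (j :: l) = simpleT m j * wordProd m l := by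
  simp [wordProd]

lemma wordProd_mem {m i : ℕ} {l : List ℕ} (hl : ∀ j ∈ l, j < m ∧ j ≠ i) :
    wordProd m l ∈ Subgroup.closure (simplesAvoiding m i) := by
  induction l with
  | nil => simp [wordProd]
  | cons a l ih =>
    rw [wordProd_cons]
    refine mul_mem (Subgroup.subset_closure ?_) (ih fun j hj => hl j (List.mem_cons_of_mem _ hj))
    obtain ⟨h1, h2⟩ := hl a List.mem_cons_self
    exact ⟨a, h1, h2, rfl⟩

/-- Let `w ∈ S_n` be one of the four elements: `s_i`;
`s_i s_{i-1} ⋯ s_{i-δ}` (`δ ≥ 1`); `s_i s_{i+1} ⋯ s_{i+δ}` (`δ ≥ 1`); or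
`s_i s_{i-1} ⋯ s_{i-δ⁻} s_{i+1} ⋯ s_{i+δ⁺}` (`δ⁻, δ⁺ ≥ 1`), where all indices lie in
`{1, …, n-1}`.  Then there is exactly one transposition `t ∈ S_n` (i.e. `t` is a 2-cycle,
`t.IsSwap`) such that `t · w` lies in the subgroup of `S_n` generated by `{s_j : j ≠ i}`.
(0-based formalization, with `i < m`.) -/
theorem statement11 {m : ℕ} (i : ℕ) (hi : i < m) (w : Equiv.Perm (Fin (m + 1)))
    (hw : (w = simpleT m i) ∨
      (∃ δ : ℕ, 1 ≤ δ ∧ δ ≤ i ∧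
        w = wordProd m (i :: (List.range δ).map (fun t => i - 1 - t))) ∨
      (∃ δ : ℕ, 1 ≤ δ ∧ i + δ < m ∧
        w = wordProd m (i :: (List.range δ).map (fun t => i + 1 + t))) ∨
      (∃ δ₁ δ₂ : ℕ, 1 ≤ δ₁ ∧ 1 ≤ δ₂ ∧ δ₁ ≤ i ∧ i + δ₂ < m ∧
        w = wordProd m
          (i :: ((List.range δ₁).map (fun t => i - 1 - t) ++
                 (List.range δ₂).map (fun t => i + 1 + t))))) :
    ∃! t : Equiv.Perm (Fin (m + 1)),
      t.IsSwap ∧ t * w ∈ Subgroup.closure (simplesAvoiding m i) := by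
  have hi1 : i < m + 1 := by omega
  have hi2 : i + 1 < m + 1 := by omega
  set a : Fin (m + 1) := ⟨i, hi1⟩ with ha
  set b : Fin (m + 1) := ⟨i + 1, hi2⟩ with hb
  have hab : a ≠ b := by
    intro h
    have : i = i + 1 := congrArg Fin.val h
    omega
  set t₀ : Equiv.Perm (Fin (m + 1)) := simpleT m i with ht₀
  have ht₀swap : t₀ = Equiv.swap a b := by rw [ht₀]; unfold simpleT; rw [dif_pos hi]
  -- t₀ * w ∈ closure
  have key : ∀ l : List ℕ, w = wordProd m (i :: l) → (∀ j ∈ l, j < m ∧ j ≠ i) →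
      t₀ * w ∈ Subgroup.closure (simplesAvoiding m i) := by
    intro l hwl hl
    rw [hwl, wordProd_cons, ← mul_assoc, ht₀, simpleT_sq, one_mul]
    exact wordProd_mem hl
  have hmem : t₀ * w ∈ Subgroup.closure (simplesAvoiding m i) := by
    rcases hw with h | ⟨δ, h1, h2, h3⟩ | ⟨δ, h1, h2, h3⟩ | ⟨δ₁, δ₂, h1, h2, h3, h4, h5⟩
    · have : w = wordProd m (i :: []) := by simp [wordProd, h, ht₀]
      exact key [] this (by simp)
    · refine key _ h3 ?_
      intro j hj
      simp only [List.mem_map, List.mem_range] at hj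
      obtain ⟨t, ht, rfl⟩ := hj
      omega
    · refine key _ h3 ?_
      intro j hj
      simp only [List.mem_map, List.mem_range] at hj
      obtain ⟨t, ht, rfl⟩ := hj
      omega
    · refine key _ h5 ?_
      intro j hj
      simp only [List.mem_append, List.mem_map, List.mem_range] at hj
      rcases hj with ⟨t, ht, rfl⟩ | ⟨t, ht, rfl⟩ <;> omega
  refine ⟨t₀, ⟨⟨a, b, hab, ht₀swap⟩, hmem⟩, ?_⟩
  rintro t ⟨⟨c, d, hcd, htcd⟩, htw⟩
  -- g := t * t₀ preserves the set {x | x ≤ i}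
  have ht₀inv : t₀⁻¹ = t₀ := by
    rw [ht₀swap]; exact Equiv.swap_inv a b
  have hg : t * t₀ ∈ Subgroup.closure (simplesAvoiding m i) := by
    have : t * t₀ = (t * w) * (t₀ * w)⁻¹ := by
      rw [mul_inv_rev, ht₀inv]
      group
    rw [this]
    exact mul_mem htw (inv_mem hmem)
  have hP := mem_closure_preserves hg
  have hta : t a = (t * t₀) b := by
    rw [Equiv.Perm.mul_apply, ht₀swap, Equiv.swap_apply_right]
  have htb : t b = (t * t₀) a := by
    rw [Equiv.Perm.mul_apply, ht₀swap, Equiv.swap_apply_left]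
  have hmova : t a ≠ a := by
    intro h
    have h1 := hP b
    rw [← hta, h] at h1
    simp only [ha, hb] at h1
    omega
  have hmovb : t b ≠ b := by
    intro h
    have h1 := hP a
    rw [← htb, h] at h1
    simp only [ha, hb] at h1
    omega
  have hac : a = c ∨ a = d := by
    by_contra h
    push_neg at h
    exact hmova (by rw [htcd, Equiv.swap_apply_of_ne_of_ne h.1 h.2])
  have hbc : b = c ∨ b = d := by
    by_contra h
    push_neg at h
    exact hmovb (by rw [htcd, Equiv.swap_apply_of_ne_of_ne h.1 h.2])
  rw [htcd, ht₀swap]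
  rcases hac with rfl | rfl
  · rcases hbc with h | rfl
    · exact absurd h.symm hab
    · rfl
  · rcases hbc with rfl | h
    · exact Equiv.swap_comm _ _
    · exact absurd h.symm hab
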